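/- Let l be a list over a linear order, faithfully ordered with respect to a finite corrupted-position set C, let z be any value, and let t be an index. If strictly more than |C| positions i ≤ t satisfy l[i] > z, then every faithful position j > t satisfies l[j] > z. (In particular, if at least δ+1 keys greater than z occur among the already-scanned positions and at most δ keys are corrupted, then some scanned key greater than z is faithful, so all faithful keys still to be read exceed z.) -/
import Mathlib


/-- A list `l` in unreliable memory is faithfully ordered with respect to the set `C`
of corrupted positions if the entries at faithful (non-corrupted) positions appear in
strictly increasing order. -/
def FaithfullyOrdered {α : Type*} [LinearOrder α] (l : List α) (C : Set ℕ) : Prop :=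
  ∀ (i j : ℕ) (hi : i < l.length) (hj : j < l.length),
    i < j → i ∉ C → j ∉ C → l[i] < l[j]

/-- if strictly more than `|C|` positions `i ≤ t` of a faithfully ordered
list hold a key greater than `z`, then every faithful position after `t` holds a key
greater than `z`. -/
theorem faithful_tail_gt_of_many_scanned_gt {α : Type*} [LinearOrder α]
    (l : List α) (C : Finset ℕ) (h : FaithfullyOrdered l ↑C) (z : α) (t : ℕ)
    (hmany : C.card <
      (Finset.univ.filter (fun i : Fin l.length => i.val ≤ t ∧ z < l.get i)).card) :
    ∀ (j : ℕ) (hj : j < l.length), t < j → j ∉ C → z < l[j] := by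
  intro j hj htj hjC
  set S := Finset.univ.filter (fun i : Fin l.length => i.val ≤ t ∧ z < l.get i) with hS
  have hex : ∃ i ∈ S, (i : Fin l.length).val ∉ C := by
    by_contra hc
    push_neg at hc
    have : S.card ≤ C.card :=
      Finset.card_le_card_of_injOn (fun i => i.val) hc
        (fun a _ b _ hab => Fin.ext hab)
    omega
  obtain ⟨i, hiS, hiC⟩ := hex
  obtain ⟨hit, hzi⟩ := (Finset.mem_filter.mp hiS).2
  have hij : i.val < j := lt_of_le_of_lt hit htj
  exact lt_trans hzi (h i.val j i.isLt hj hij hiC hjC)
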